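/- Let s ≥ 2 and ℓ ≥ 0 be integers. Every finite simple graph G with edge density e(G)/|V(G)| ≥ 30·s·√(log s) + 2ℓ contains the disjoint union of K_s and a matching of size ℓ as a minor. -/

import Mathlib

open SimpleGraph

/-- `G` has an `H` minor: there is a model of `H` in `G`, i.e. a family of disjoint
connected branch sets joined by edges of `G` according to the edges of `H`. -/
def HasMinor {V W : Type*} (G : SimpleGraph V) (H : SimpleGraph W) : Prop :=
  ∃ X : W → Set V, (∀ w, (G.induce (X w)).Connected) ∧
    (∀ w₁ w₂, w₁ ≠ w₂ → Disjoint (X w₁) (X w₂)) ∧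
    (∀ w₁ w₂, H.Adj w₁ w₂ → ∃ a ∈ X w₁, ∃ b ∈ X w₂, G.Adj a b)

/-- The graph `K_s + ℓK₂`: disjoint union of a complete graph on `s` vertices and a
matching of size `ℓ`. -/
def ksPlusMatching (s l : ℕ) : SimpleGraph (Fin s ⊕ Fin l × Fin 2) :=
  SimpleGraph.fromRel (fun u v => match u, v with
    | Sum.inl _, Sum.inl _ => True
    | Sum.inr ⟨i, _⟩, Sum.inr ⟨j, _⟩ => i = j
    | _, _ => False)

lemma minor_map {V' V W : Type*} {G' : SimpleGraph V'} {G : SimpleGraph V} {H : SimpleGraph W}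
    (f : V' → V) (hinj : Function.Injective f)
    (hadj : ∀ a b, G'.Adj a b → G.Adj (f a) (f b)) (h : HasMinor G' H) :
    ∃ X : W → Set V, (∀ w, X w ⊆ Set.range f) ∧ (∀ w, (G.induce (X w)).Connected) ∧
      (∀ w₁ w₂, w₁ ≠ w₂ → Disjoint (X w₁) (X w₂)) ∧
      (∀ w₁ w₂, H.Adj w₁ w₂ → ∃ a ∈ X w₁, ∃ b ∈ X w₂, G.Adj a b) := by
  obtain ⟨X, hc, hdis, he⟩ := h
  refine ⟨fun w => f '' X w, fun w => Set.image_subset_range _ _, fun w => ?_, ?_, ?_⟩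
  · refine (hc w).map (⟨fun x => ⟨f x, ⟨x, x.2, rfl⟩⟩, fun {a b} hab => hadj _ _ hab⟩ :
      (G'.induce (X w)) →g (G.induce (f '' X w))) ?_
    rintro ⟨_, x, hx, rfl⟩
    exact ⟨⟨x, hx⟩, rfl⟩
  · intro w₁ w₂ hne
    exact (Set.disjoint_image_iff hinj).2 (hdis w₁ w₂ hne)
  · intro w₁ w₂ hadj'
    obtain ⟨a, ha, b, hb, hab⟩ := he w₁ w₂ hadj'
    exact ⟨f a, ⟨a, ha, rfl⟩, f b, ⟨b, hb, rfl⟩, hadj _ _ hab⟩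

lemma connected_induce_singleton {V : Type*} (G : SimpleGraph V) (u : V) :
    (G.induce {u}).Connected := by
  have : Nonempty ({u} : Set V) := ⟨⟨u, rfl⟩⟩
  exact ⟨fun a b => (Subsingleton.elim a b) ▸ Reachable.refl a⟩

lemma edge_count {V : Type*} [Fintype V] [DecidableEq V] (G : SimpleGraph V)
    [DecidableRel G.Adj] (u v : V) :
    G.edgeSet.ncard ≤ (G.induce ({u,v}ᶜ : Set V)).edgeSet.ncard + G.degree u + G.degree v := by
  have hsub : G.edgeSet ⊆ (Sym2.map (Subtype.val : ({u,v}ᶜ : Set V) → V)) ''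
      (G.induce ({u,v}ᶜ : Set V)).edgeSet ∪ G.incidenceSet u ∪ G.incidenceSet v := by
    intro e he
    induction e with
    | _ a b =>
      by_cases hu : u ∈ (s(a,b) : Sym2 V)
      · exact Or.inl (Or.inr ⟨he, hu⟩)
      by_cases hv : v ∈ (s(a,b) : Sym2 V)
      · exact Or.inr ⟨he, hv⟩
      · rw [Sym2.mem_iff] at hu hv
        push_neg at hu hv
        have ha : a ∈ ({u,v}ᶜ : Set V) := by simp; tauto
        have hb : b ∈ ({u,v}ᶜ : Set V) := by simp; tauto
        exact Or.inl (Or.inl ⟨s(⟨a, ha⟩, ⟨b, hb⟩), he, rfl⟩)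
  calc G.edgeSet.ncard ≤ _ := Set.ncard_le_ncard hsub (Set.toFinite _)
    _ ≤ ((Sym2.map (Subtype.val : ({u,v}ᶜ : Set V) → V)) ''
      (G.induce ({u,v}ᶜ : Set V)).edgeSet ∪ G.incidenceSet u).ncard + (G.incidenceSet v).ncard :=
      Set.ncard_union_le _ _
    _ ≤ _ := by
      have h1 := Set.ncard_union_le ((Sym2.map (Subtype.val : ({u,v}ᶜ : Set V) → V)) ''
        (G.induce ({u,v}ᶜ : Set V)).edgeSet) (G.incidenceSet u)
      have h2 : ((Sym2.map (Subtype.val : ({u,v}ᶜ : Set V) → V)) ''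
          (G.induce ({u,v}ᶜ : Set V)).edgeSet).ncard = (G.induce ({u,v}ᶜ : Set V)).edgeSet.ncard :=
        Set.ncard_image_of_injective _ (Sym2.map.injective Subtype.val_injective)
      have h3 : (G.incidenceSet u).ncard = G.degree u := by
        rw [← Nat.card_coe_set_eq, Nat.card_eq_fintype_card, G.card_incidenceSet_eq_degree]
      have h4 : (G.incidenceSet v).ncard = G.degree v := by
        rw [← Nat.card_coe_set_eq, Nat.card_eq_fintype_card, G.card_incidenceSet_eq_degree]
      omega

lemma ks_adj {s l : ℕ} (x y : Fin s ⊕ Fin l × Fin 2) : (ksPlusMatching s l).Adj x y ↔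
    (∃ i j : Fin s, i ≠ j ∧ x = .inl i ∧ y = .inl j) ∨
    (∃ (i : Fin l) (k k' : Fin 2), k ≠ k' ∧ x = .inr (i,k) ∧ y = .inr (i,k')) := by
  rw [ksPlusMatching, fromRel_adj]
  rcases x with i | ⟨i, k⟩ <;> rcases y with j | ⟨j, k'⟩ <;> simp_all [Prod.ext_iff]
  constructor
  · rintro ⟨h1, h2⟩
    have hij : i = j := h2.elim id Eq.symm
    subst hij
    refine ⟨i, ?_⟩
    have := h1 rfl
    fin_cases k <;> fin_cases k' <;> simp_all
  · rintro ⟨i', ⟨⟨rfl, rfl⟩, rfl, rfl⟩ | ⟨⟨rfl, rfl⟩, rfl, rfl⟩⟩ <;> simp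

universe u in
theorem stmt_aux (s : ℕ) (hs : 2 ≤ s)
    (kostochka : ∀ (W : Type u) [Fintype W] (G' : SimpleGraph W) (t : ℕ), 2 ≤ t →
      30 * (t : ℝ) * Real.sqrt (Real.log t) ≤ (G'.edgeSet.ncard : ℝ) / (Nat.card W : ℝ) →
      HasMinor G' (⊤ : SimpleGraph (Fin t))) :
    ∀ (l : ℕ) (V : Type u) [Fintype V] (G : SimpleGraph V),
      30 * (s : ℝ) * Real.sqrt (Real.log s) + 2 * l ≤
        (G.edgeSet.ncard : ℝ) / (Nat.card V : ℝ) →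
      HasMinor G (ksPlusMatching s l) := by
  intro l
  induction l with
  | zero =>
    intro V _ G hd
    obtain ⟨X, hXc, hXdis, hXe⟩ := kostochka V G s hs (by simpa using hd)
    refine ⟨Sum.elim X (fun p => p.1.elim0), ?_, ?_, ?_⟩
    · rintro (i | ⟨i, k⟩)
      · exact hXc i
      · exact i.elim0
    · rintro (i | ⟨i, k⟩) (j | ⟨j, k'⟩) hne
      · exact hXdis i j (fun h => hne (by rw [h]))
      · exact j.elim0
      · exact i.elim0
      · exact i.elim0
    · intro w₁ w₂ hadj
      rw [ks_adj] at hadj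
      rcases hadj with ⟨i, j, hne, rfl, rfl⟩ | ⟨i, _, _, _, _, _⟩
      · exact hXe i j (by simp [hne])
      · exact i.elim0
  | succ l ih =>
    intro V _ G hd
    classical
    set c := 30 * (s : ℝ) * Real.sqrt (Real.log s) with hcdef
    have hc0 : 0 ≤ c := by positivity
    set n := Nat.card V with hn
    have hV : (Fintype.card V : ℕ) = n := Nat.card_eq_fintype_card.symm
    -- n ≥ 1
    have hn0 : 0 < n := by
      rcases Nat.eq_zero_or_pos n with h | h
      · rw [h] at hd
        norm_num at hd
        nlinarith [hd]
      · exact h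
    have hd' : (c + 2 * (l + 1 : ℕ)) * n ≤ (G.edgeSet.ncard : ℝ) := by
      rw [le_div_iff₀ (by exact_mod_cast hn0 : (0:ℝ) < n)] at hd
      exact hd
    have hchoose : G.edgeSet.ncard ≤ n.choose 2 := by
      rw [Set.ncard_eq_toFinset_card' ]
      calc G.edgeSet.toFinset.card = G.edgeFinset.card := by rw [SimpleGraph.edgeFinset]
        _ ≤ (Fintype.card V).choose 2 := G.card_edgeFinset_le_card_choose_two
        _ = n.choose 2 := by rw [hV]
    push_cast at hd'
    have hn3 : 3 ≤ n := by
      by_contra h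
      push_neg at h
      have hch : n.choose 2 ≤ 1 := by interval_cases n <;> simp
      have h1 : (G.edgeSet.ncard : ℝ) ≤ 1 := by exact_mod_cast le_trans hchoose hch
      have hnn : (1:ℝ) ≤ n := by exact_mod_cast hn0
      nlinarith [hd', hnn]
    -- get an edge
    have hepos : G.edgeSet.Nonempty := by
      rw [← Set.ncard_pos (Set.toFinite _)]
      by_contra h
      push_neg at h
      have : G.edgeSet.ncard = 0 := by omega
      rw [this] at hd'
      norm_num at hd'
      have hnn : (1:ℝ) ≤ n := by exact_mod_cast hn0
      have hl0 : (0:ℝ) ≤ l := Nat.cast_nonneg l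
      nlinarith [hd', hnn, hl0, hc0]
    obtain ⟨e, he⟩ := hepos
    have hAdj : ∃ a b, G.Adj a b := by
      induction e with
      | _ a b => exact ⟨a, b, he⟩
    obtain ⟨u, v, huv⟩ := hAdj
    have huvne : u ≠ v := huv.ne
    set S : Set V := {u, v}ᶜ with hS
    have hcardS : Nat.card ↥S = n - 2 := by
      rw [Nat.card_coe_set_eq, hS]
      have := Set.ncard_add_ncard_compl ({u, v} : Set V)
      rw [Set.ncard_pair huvne] at this
      omega
    have hcardS' : (Nat.card ↥S : ℝ) = (n : ℝ) - 2 := by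
      rw [hcardS]
      push_cast [Nat.cast_sub (by omega : 2 ≤ n)]
      ring
    have hec := edge_count G u v
    rw [← hS] at hec
    have hdegu : G.degree u ≤ n - 1 := by have := G.degree_lt_card_verts u; omega
    have hdegv : G.degree v ≤ n - 1 := by have := G.degree_lt_card_verts v; omega
    have hec' : (G.edgeSet.ncard : ℝ) ≤ ((G.induce S).edgeSet.ncard : ℝ) + 2 * n - 2 := by
      have h5 : G.edgeSet.ncard ≤ (G.induce S).edgeSet.ncard + (n - 1) + (n - 1) := by omega
      have := (Nat.cast_le (α := ℝ)).2 h5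
      push_cast [Nat.cast_sub (by omega : 1 ≤ n)] at this
      linarith
    have h7 : (3:ℝ) ≤ n := by exact_mod_cast hn3
    have hl0 : (0:ℝ) ≤ l := Nat.cast_nonneg l
    have hd2 : c + 2 * (l : ℕ) ≤ ((G.induce S).edgeSet.ncard : ℝ) / (Nat.card ↥S : ℝ) := by
      rw [hcardS', le_div_iff₀ (by linarith)]
      nlinarith [hc0, hd', hec', h7, hl0]
    obtain ⟨Y, hYsub, hYc, hYdis, hYe⟩ := minor_map (Subtype.val : ↥S → V)
      Subtype.val_injective (fun a b h => h) (ih ↥S (G.induce S) hd2)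
    simp only [Subtype.range_coe] at hYsub
    have huS : u ∉ S := by simp [hS]
    have hvS : v ∉ S := by simp [hS]
    -- build the new model
    refine ⟨Sum.elim (fun i => Y (.inl i))
      (fun p => if h : (p.1 : ℕ) < l then Y (.inr (⟨p.1, h⟩, p.2))
        else if p.2 = 0 then {u} else {v}), ?_, ?_, ?_⟩
    · rintro (i | ⟨i, k⟩)
      · exact hYc _
      · by_cases hil : (i : ℕ) < l
        · simp only [Sum.elim_inr]
          rw [dif_pos hil]
          exact hYc _
        · by_cases hk : k = 0
          · simp only [Sum.elim_inr]
            rw [dif_neg hil, if_pos hk]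
            exact connected_induce_singleton G u
          · simp only [Sum.elim_inr]
            rw [dif_neg hil, if_neg hk]
            exact connected_induce_singleton G v
    · have hYS : ∀ w, Disjoint (Y w) {u} ∧ Disjoint (Y w) {v} := by
        intro w
        constructor <;> rw [Set.disjoint_singleton_right] <;> intro hmem
        · exact huS (hYsub _ hmem)
        · exact hvS (hYsub _ hmem)
      have hsing : ∀ (p : Fin (l+1) × Fin 2) (w), ¬ ((p.1 : ℕ) < l) →
          Disjoint (Y w) (if p.2 = 0 then ({u} : Set V) else {v}) := by
        intro p w _
        by_cases hk : p.2 = 0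
        · rw [if_pos hk]; exact (hYS w).1
        · rw [if_neg hk]; exact (hYS w).2
      rintro (i | ⟨i, k⟩) (j | ⟨j, k'⟩) hne <;> simp only [Sum.elim_inl, Sum.elim_inr]
      · exact hYdis _ _ (fun h => hne (by injection h with h; rw [h]))
      · by_cases hjl : (j : ℕ) < l
        · rw [dif_pos hjl]; exact hYdis _ _ (by simp)
        · rw [dif_neg hjl]; exact hsing (j, k') _ hjl
      · by_cases hil : (i : ℕ) < l
        · rw [dif_pos hil]; exact hYdis _ _ (by simp)
        · rw [dif_neg hil]; exact (disjoint_comm.mp (hsing (i, k) _ hil))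
      · have hne' : i ≠ j ∨ k ≠ k' := by
          by_contra hcon
          push_neg at hcon
          exact hne (by rw [hcon.1, hcon.2])
        by_cases hil : (i : ℕ) < l <;> by_cases hjl : (j : ℕ) < l
        · rw [dif_pos hil, dif_pos hjl]
          refine hYdis _ _ ?_
          intro hcon
          injection hcon with hcon
          rcases hne' with h | h
          · exact h (Fin.ext (congrArg (fun q => ((q.1 : Fin l) : ℕ)) hcon))
          · exact h (congrArg Prod.snd hcon)
        · rw [dif_pos hil, dif_neg hjl]
          exact hsing (j, k') _ hjl
        · rw [dif_neg hil, dif_pos hjl]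
          exact disjoint_comm.mp (hsing (i, k) _ hil)
        · rw [dif_neg hil, dif_neg hjl]
          have hij : i = j := Fin.ext (by omega)
          have hkk : k ≠ k' := by
            rcases hne' with h | h
            · exact absurd hij h
            · exact h
          by_cases hk : k = 0 <;> by_cases hk' : k' = 0
          · exact absurd (hk.trans hk'.symm) hkk
          · rw [if_pos hk, if_neg hk', Set.disjoint_singleton_right]
            exact fun h => huvne (Set.mem_singleton_iff.mp h).symm
          · rw [if_neg hk, if_pos hk', Set.disjoint_singleton_right]
            exact fun h => huvne (Set.mem_singleton_iff.mp h)
          · have : k = k' := by omega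
            exact absurd this hkk
    · intro w₁ w₂ hadj
      rw [ks_adj] at hadj
      rcases hadj with ⟨i, j, hne, rfl, rfl⟩ | ⟨i, k, k', hkk, rfl, rfl⟩
      · have := hYe (.inl i) (.inl j) (by rw [ks_adj]; exact Or.inl ⟨i, j, hne, rfl, rfl⟩)
        simpa using this
      · simp only [Sum.elim_inr]
        by_cases h : (i : ℕ) < l
        · rw [dif_pos h, dif_pos h]
          have := hYe (.inr (⟨i, h⟩, k)) (.inr (⟨i, h⟩, k'))
            (by rw [ks_adj]; exact Or.inr ⟨⟨i, h⟩, k, k', hkk, rfl, rfl⟩)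
          simpa using this
        · rw [dif_neg h, dif_neg h]
          have hk2 : (k = 0 ∧ k' = 1) ∨ (k = 1 ∧ k' = 0) := by omega
          rcases hk2 with ⟨rfl, rfl⟩ | ⟨rfl, rfl⟩
          · rw [if_pos rfl, if_neg (by omega : ¬(1 : Fin 2) = 0)]
            exact ⟨u, rfl, v, rfl, huv⟩
          · rw [if_neg (by omega : ¬(1 : Fin 2) = 0), if_pos rfl]
            exact ⟨v, rfl, u, rfl, huv.symm⟩

/-- (given Kostochka's theorem) every graph of density at least
`30·s·√(log s) + 2ℓ` contains `K_s + ℓK₂` as a minor. -/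
theorem stmt_4 {V : Type u} [Fintype V] (s l : ℕ) (hs : 2 ≤ s)
    (kostochka : ∀ (W : Type u) [Fintype W] (G' : SimpleGraph W) (t : ℕ), 2 ≤ t →
      30 * (t : ℝ) * Real.sqrt (Real.log t) ≤ (G'.edgeSet.ncard : ℝ) / (Nat.card W : ℝ) →
      HasMinor G' (⊤ : SimpleGraph (Fin t)))
    (G : SimpleGraph V)
    (hd : 30 * (s : ℝ) * Real.sqrt (Real.log s) + 2 * l ≤
      (G.edgeSet.ncard : ℝ) / (Nat.card V : ℝ)) :
    HasMinor G (ksPlusMatching s l) := by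
  exact stmt_aux s hs kostochka l V G hd
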